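/- Let f be a positive monotone decreasing function on (0,b] (b > 0) for which Q = ∫₀^b f dx is finite. Then -∫₀^b f(x)(1 + ln(x f(x))) dx ≥ -Q ln Q. -/

import Mathlib

open MeasureTheory Topology Filter

/-- Let `f` be a positive monotone decreasing function on `(0,b]` for which
`Q = ∫₀^b f dx` is finite (and for which the entropy integral exists).  Then
`-∫₀^b f(x)(1 + ln(x f(x))) dx ≥ -Q ln Q`. -/
theorem antitone_integral_log_inequality_zero (b : ℝ) (hb : 0 < b) (f : ℝ → ℝ)
    (hpos : ∀ x ∈ Set.Ioc (0:ℝ) b, 0 < f x)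
    (hmono : AntitoneOn f (Set.Ioc (0:ℝ) b))
    (hint : IntegrableOn f (Set.Ioc (0:ℝ) b))
    (hint2 : IntegrableOn (fun x => f x * (1 + Real.log (x * f x))) (Set.Ioc (0:ℝ) b))
    (Q : ℝ) (hQ : Q = ∫ x in Set.Ioc (0:ℝ) b, f x) :
    (-∫ x in Set.Ioc (0:ℝ) b, f x * (1 + Real.log (x * f x)))
      ≥ -Q * Real.log Q := by
  classical
  set φ : ℝ → ℝ := fun x => f x * (1 + Real.log (x * f x)) with hφdef
  set F : ℝ → ℝ := fun u => ∫ t in Set.Ioc (0:ℝ) u, f t with hFdef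
  set c : ℝ → ℝ := fun x => sSup (f '' Set.Ioo x b) with hcdef
  set φt : ℝ → ℝ := fun x => c x * (1 + Real.log (x * c x)) with hφtdef
  -- basic facts about c
  have hbdd : ∀ x ∈ Set.Ioo (0:ℝ) b, BddAbove (f '' Set.Ioo x b) := by
    intro x hx
    refine ⟨f x, ?_⟩
    rintro y ⟨t, ht, rfl⟩
    exact hmono ⟨hx.1, hx.2.le⟩ ⟨hx.1.trans ht.1, ht.2.le⟩ ht.1.le
  have hmid : ∀ x : ℝ, x < b → (x + b) / 2 ∈ Set.Ioo x b := by
    intro x hx; constructor <;> [linarith; linarith]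
  have hne : ∀ x ∈ Set.Ioo (0:ℝ) b, (f '' Set.Ioo x b).Nonempty :=
    fun x hx => ⟨f ((x + b) / 2), Set.mem_image_of_mem f (hmid x hx.2)⟩
  have hcle : ∀ x ∈ Set.Ioo (0:ℝ) b, c x ≤ f x := by
    intro x hx
    refine csSup_le (hne x hx) ?_
    rintro y ⟨t, ht, rfl⟩
    exact hmono ⟨hx.1, hx.2.le⟩ ⟨hx.1.trans ht.1, ht.2.le⟩ ht.1.le
  have hcpos : ∀ x ∈ Set.Ioo (0:ℝ) b, 0 < c x := by
    intro x hx
    have h1 := le_csSup (hbdd x hx) (Set.mem_image_of_mem f (hmid x hx.2))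
    have h2 : 0 < f ((x + b) / 2) :=
      hpos _ ⟨hx.1.trans (hmid x hx.2).1, (hmid x hx.2).2.le⟩
    linarith
  -- x * f x ≤ F x
  have hxfF : ∀ x ∈ Set.Ioc (0:ℝ) b, x * f x ≤ F x := by
    intro x hx
    have h1 : Set.Ioc (0:ℝ) x ⊆ Set.Ioc (0:ℝ) b := Set.Ioc_subset_Ioc_right hx.2
    have h2 : IntegrableOn f (Set.Ioc (0:ℝ) x) := hint.mono_set h1
    have h3 : (∫ _t in Set.Ioc (0:ℝ) x, f x) ≤ F x := by
      refine setIntegral_mono_on ?_ h2 measurableSet_Ioc ?_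
      · exact integrableOn_const measure_Ioc_lt_top.ne enorm_ne_top
      · intro t ht
        exact hmono (h1 ht) hx ht.2
    rw [setIntegral_const, measureReal_def, Real.volume_Ioc, smul_eq_mul,
      ENNReal.toReal_ofReal (by linarith [hx.1])] at h3
    linarith
  have hFpos : ∀ x ∈ Set.Ioc (0:ℝ) b, 0 < F x := fun x hx =>
    lt_of_lt_of_le (mul_pos hx.1 (hpos x hx)) (hxfF x hx)
  have hIntIcc : IntegrableOn f (Set.Icc (0:ℝ) b) :=
    (integrableOn_Icc_iff_integrableOn_Ioc enorm_ne_top).2 hint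
  have hFcont : ContinuousOn F (Set.Icc (0:ℝ) b) :=
    intervalIntegral.continuousOn_primitive hIntIcc
  have hF0 : F 0 = 0 := by simp [hFdef]
  have hFb : F b = Q := hQ.symm
  -- countable bad set
  have hSc : Set.Countable {x | x ∈ Set.Ioo (0:ℝ) b ∧ c x ≠ f x} := by
    have hex : ∀ x ∈ {x | x ∈ Set.Ioo (0:ℝ) b ∧ c x ≠ f x},
        ∃ q : ℚ, c x < (q : ℝ) ∧ (q : ℝ) < f x := by
      intro x hx
      exact exists_rat_btwn (lt_of_le_of_ne (hcle x hx.1) hx.2)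
    choose! q hq using hex
    refine Set.MapsTo.countable_of_injOn (Set.mapsTo_univ q _) ?_ Set.countable_univ
    intro x hx y hy hxy
    by_contra hnexy
    rcases lt_or_gt_of_ne hnexy with h | h
    · have h1 : f y ≤ c x := le_csSup (hbdd x hx.1) (Set.mem_image_of_mem f ⟨h, hy.1.2⟩)
      have h2 := (hq x hx).1
      have h3 := (hq y hy).2
      rw [hxy] at h2
      linarith
    · have h1 : f x ≤ c y := le_csSup (hbdd y hy.1) (Set.mem_image_of_mem f ⟨h, hx.1.2⟩)
      have h2 := (hq y hy).1
      have h3 := (hq x hx).2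
      rw [hxy] at h3
      linarith
  have hNnull : volume ({x | x ∈ Set.Ioo (0:ℝ) b ∧ c x ≠ f x} ∪ {b}) = 0 := by
    refine measure_union_null (hSc.measure_zero _) (measure_singleton b)
  have haeeq : ∀ᵐ x : ℝ, x ∉ ({x | x ∈ Set.Ioo (0:ℝ) b ∧ c x ≠ f x} ∪ {b}) := by
    exact measure_eq_zero_iff_ae_notMem.mp hNnull
  have hφeq : ∀ x : ℝ, x ∉ ({x | x ∈ Set.Ioo (0:ℝ) b ∧ c x ≠ f x} ∪ {b}) →
      x ∈ Set.Ioc (0:ℝ) b → φ x = φt x := by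
    intro x hx hmem
    have hxb : x ≠ b := fun h => hx (Or.inr h)
    have hx0 : x ∈ Set.Ioo (0:ℝ) b := ⟨hmem.1, lt_of_le_of_ne hmem.2 hxb⟩
    have hcf : c x = f x := by
      by_contra hne'
      exact hx (Or.inl ⟨hx0, hne'⟩)
    simp [hφdef, hφtdef, hcf]
  -- key inequality for each ε
  have key : ∀ ε ∈ Set.Ioo (0:ℝ) b,
      (∫ x in Set.Ioc ε b, φ x) ≤ F b * Real.log (F b) - F ε * Real.log (F ε) := by
    intro ε hε
    have hsub : Set.Icc ε b ⊆ Set.Ioc (0:ℝ) b := fun t ht => ⟨hε.1.trans_le ht.1, ht.2⟩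
    have hφint : IntegrableOn φ (Set.Icc ε b) := hint2.mono_set hsub
    have hφtint : IntegrableOn φt (Set.Icc ε b) := by
      refine hφint.congr ?_
      rw [Filter.EventuallyEq, ae_restrict_iff' measurableSet_Icc]
      filter_upwards [haeeq] with x hx hmem
      exact hφeq x hx (hsub hmem)
    have hHcont : ContinuousOn (fun u => F u * Real.log (F u)) (Set.Icc ε b) :=
      Real.continuous_mul_log.comp_continuousOn
        (hFcont.mono (Set.Icc_subset_Icc hε.1.le le_rfl))
    have hderiv : ∀ x ∈ Set.Ioo ε b,
        HasDerivWithinAt (fun u => F u * Real.log (F u))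
          ((Real.log (F x) + 1) * c x) (Set.Ioi x) x := by
      intro x hx
      have hx0 : x ∈ Set.Ioo (0:ℝ) b := ⟨hε.1.trans hx.1, hx.2⟩
      have hxc : x ∈ Set.Ioc (0:ℝ) b := ⟨hx0.1, hx0.2.le⟩
      have hii : IntervalIntegrable f volume 0 x := by
        rw [intervalIntegrable_iff_integrableOn_Ioc_of_le hx0.1.le]
        exact hint.mono_set (Set.Ioc_subset_Ioc_right hx0.2.le)
      have hmemIoc : Set.Ioc (0:ℝ) b ∈ 𝓝[>] x := by
        refine Filter.mem_of_superset
          (nhdsWithin_le_nhds (Ioo_mem_nhds hx0.1 hx0.2)) ?_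
        exact fun t ht => ⟨ht.1, ht.2.le⟩
      have hmeasat : StronglyMeasurableAtFilter f (𝓝[>] x) volume :=
        ⟨Set.Ioc (0:ℝ) b, hmemIoc, hint.1⟩
      have htd : Filter.Tendsto f (𝓝[>] x) (𝓝 (c x)) := by
        refine AntitoneOn.tendsto_nhdsWithin_Ioo_right ⟨(x + b) / 2, hmid x hx0.2⟩
          (hmono.mono ?_) (hbdd x hx0)
        exact fun t ht => ⟨hx0.1.trans ht.1, ht.2.le⟩
      have hd1 : HasDerivWithinAt (fun u => ∫ t in (0:ℝ)..u, f t) (c x) (Set.Ici x) x :=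
        intervalIntegral.integral_hasDerivWithinAt_of_tendsto_ae_right hii hmeasat
          (htd.mono_left inf_le_left)
      have hd2 : HasDerivWithinAt F (c x) (Set.Ioi x) x := by
        refine (hd1.mono Set.Ioi_subset_Ici_self).congr ?_ ?_
        · intro y hy
          rw [hFdef]
          exact (intervalIntegral.integral_of_le (le_of_lt (hx0.1.trans hy))).symm
        · rw [hFdef]
          exact (intervalIntegral.integral_of_le hx0.1.le).symm
      have hd3 := (Real.hasDerivAt_mul_log (ne_of_gt (hFpos x hxc))).comp_hasDerivWithinAt x hd2
      exact hd3
    have hineq : ∀ x ∈ Set.Ioo ε b, φt x ≤ (Real.log (F x) + 1) * c x := by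
      intro x hx
      have hx0 : x ∈ Set.Ioo (0:ℝ) b := ⟨hε.1.trans hx.1, hx.2⟩
      have hxc : x ∈ Set.Ioc (0:ℝ) b := ⟨hx0.1, hx0.2.le⟩
      have hc0 : 0 < c x := hcpos x hx0
      have h1 : 0 < x * c x := mul_pos hx0.1 hc0
      have h2 : x * c x ≤ F x := by
        have := hcle x hx0
        nlinarith [hxfF x hxc, hx0.1]
      have h3 : Real.log (x * c x) ≤ Real.log (F x) := Real.log_le_log h1 h2
      show c x * (1 + Real.log (x * c x)) ≤ (Real.log (F x) + 1) * c x
      nlinarith [mul_le_mul_of_nonneg_left h3 hc0.le]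
    have main := intervalIntegral.integral_le_sub_of_hasDeriv_right_of_le hε.2.le
      hHcont hderiv hφtint hineq
    rw [intervalIntegral.integral_of_le hε.2.le] at main
    have hcongr : (∫ x in Set.Ioc ε b, φ x) = ∫ x in Set.Ioc ε b, φt x := by
      refine setIntegral_congr_ae measurableSet_Ioc ?_
      filter_upwards [haeeq] with x hx hmem
      exact hφeq x hx ⟨hε.1.trans hmem.1, hmem.2⟩
    rw [hcongr]
    exact main
  -- limits
  have hIoomem : Set.Ioo (0:ℝ) b ∈ 𝓝[>] (0:ℝ) := by
    have h1 : Set.Iio b ∈ 𝓝[>] (0:ℝ) := nhdsWithin_le_nhds (Iio_mem_nhds hb)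
    have h2 : Set.Ioi (0:ℝ) ∈ 𝓝[>] (0:ℝ) := self_mem_nhdsWithin
    have := Filter.inter_mem h2 h1
    simpa [Set.Ioi_inter_Iio] using this
  have hle_filter : 𝓝[>] (0:ℝ) ≤ 𝓝[Set.Icc (0:ℝ) b] (0:ℝ) := by
    refine nhdsWithin_le_iff.2 ?_
    exact Filter.mem_of_superset hIoomem (fun t ht => ⟨ht.1.le, ht.2.le⟩)
  have hlim1 : Filter.Tendsto (fun ε => ∫ x in Set.Ioc ε b, φ x) (𝓝[>] (0:ℝ))
      (𝓝 (∫ x in Set.Ioc (0:ℝ) b, φ x)) := by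
    have hIcc2 : IntegrableOn φ (Set.Icc (0:ℝ) b) :=
      (integrableOn_Icc_iff_integrableOn_Ioc enorm_ne_top).2 hint2
    have hcontp : ContinuousOn (fun u => ∫ t in Set.Ioc (0:ℝ) u, φ t) (Set.Icc (0:ℝ) b) :=
      intervalIntegral.continuousOn_primitive hIcc2
    have h0 : Filter.Tendsto (fun ε => ∫ t in Set.Ioc (0:ℝ) ε, φ t) (𝓝[>] (0:ℝ)) (𝓝 0) := by
      have h1 := (hcontp 0 (Set.left_mem_Icc.2 hb.le)).tendsto.mono_left hle_filter
      simpa using h1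
    have hsplit : ∀ᶠ ε in 𝓝[>] (0:ℝ),
        (∫ x in Set.Ioc (0:ℝ) b, φ x) - (∫ t in Set.Ioc (0:ℝ) ε, φ t)
          = ∫ x in Set.Ioc ε b, φ x := by
      filter_upwards [hIoomem] with ε hε
      have hdisj : Disjoint (Set.Ioc (0:ℝ) ε) (Set.Ioc ε b) := Set.Ioc_disjoint_Ioc_of_le le_rfl
      have hu := setIntegral_union hdisj measurableSet_Ioc
        (hint2.mono_set (Set.Ioc_subset_Ioc_right hε.2.le))
        (hint2.mono_set (Set.Ioc_subset_Ioc_left hε.1.le))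
      rw [Set.Ioc_union_Ioc_eq_Ioc hε.1.le hε.2.le] at hu
      rw [hu]; ring
    have hT : Filter.Tendsto
        (fun ε => (∫ x in Set.Ioc (0:ℝ) b, φ x) - ∫ t in Set.Ioc (0:ℝ) ε, φ t)
        (𝓝[>] (0:ℝ)) (𝓝 (∫ x in Set.Ioc (0:ℝ) b, φ x)) := by
      simpa using tendsto_const_nhds.sub h0
    exact hT.congr' hsplit
  have hlim2 : Filter.Tendsto (fun ε => F b * Real.log (F b) - F ε * Real.log (F ε))
      (𝓝[>] (0:ℝ)) (𝓝 (F b * Real.log (F b))) := by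
    have hc1 : ContinuousOn (fun u => F u * Real.log (F u)) (Set.Icc (0:ℝ) b) :=
      Real.continuous_mul_log.comp_continuousOn hFcont
    have h1 := (hc1 0 (Set.left_mem_Icc.2 hb.le)).tendsto.mono_left hle_filter
    have h2 : Filter.Tendsto (fun ε => F ε * Real.log (F ε)) (𝓝[>] (0:ℝ)) (𝓝 0) := by
      simpa [hF0] using h1
    simpa using tendsto_const_nhds.sub h2
  have hfinal : (∫ x in Set.Ioc (0:ℝ) b, φ x) ≤ F b * Real.log (F b) := by
    refine le_of_tendsto_of_tendsto hlim1 hlim2 ?_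
    filter_upwards [hIoomem] with ε hε using key ε hε
  rw [hFb] at hfinal
  have : -∫ x in Set.Ioc (0:ℝ) b, φ x ≥ -(Q * Real.log Q) := neg_le_neg hfinal
  linarith
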